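/- Let ℵ be an infinite cardinal, let X_i = ∏_{s∈S_i} X_{i,s} (i = 1,…,n) be products of metrizable spaces, each X_{i,s} containing at least two points, and suppose |S₁| > ℵ. If every separately continuous function f : X₁ × ⋯ × Xₙ → ℝ depends on at most ℵ coordinates with respect to the first variable, then d(X_{i,s}) ≤ ℵ for every i and s. -/

import Mathlib

universe u

open Cardinal

/-- Property (I_ℵ): every locally finite family of nonempty open sets has cardinality ≤ ℵ. -/
def PropI (c : Cardinal.{u}) (X : Type u) [TopologicalSpace X] : Prop :=
  ∀ (I : Type u) (U : I → Set X), (∀ i, IsOpen (U i)) → (∀ i, (U i).Nonempty) →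
    LocallyFinite U → #I ≤ c

/-- Property (II_ℵ): every pointwise finite family of nonempty open sets has cardinality ≤ ℵ. -/
def PropII (c : Cardinal.{u}) (X : Type u) [TopologicalSpace X] : Prop :=
  ∀ (I : Type u) (U : I → Set X), (∀ i, IsOpen (U i)) → (∀ i, (U i).Nonempty) →
    (∀ x : X, {i | x ∈ U i}.Finite) → #I ≤ c

/-- Property (III_ℵ): every ℵ-pointwise family of nonempty open sets has cardinality ≤ ℵ. -/
def PropIII (c : Cardinal.{u}) (X : Type u) [TopologicalSpace X] : Prop :=
  ∀ (I : Type u) (U : I → Set X), (∀ i, IsOpen (U i)) → (∀ i, (U i).Nonempty) →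
    (∀ x : X, #{i | x ∈ U i} ≤ c) → #I ≤ c
/-- If a metric space has no dense set of cardinality at most `c`, then for some `ε > 0`
there is an `ε`-separated set of cardinality greater than `c`. -/
lemma exists_separated_of_dense_large (c : Cardinal.{u}) (hc : Cardinal.aleph0 ≤ c)
    (Y : Type u) [MetricSpace Y] (h : ∀ D : Set Y, Dense D → c < #D) :
    ∃ ε : ℝ, 0 < ε ∧ ∃ A : Set Y, c < #A ∧ A.Pairwise fun a b => ε ≤ dist a b := by
  by_contra hcon
  push_neg at hcon
  -- for each n, get a maximal (1/(n+1))-separated set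
  have key : ∀ n : ℕ, ∃ M : Set Y, (M.Pairwise fun a b => (1 : ℝ)/(n+1) ≤ dist a b) ∧
      ∀ y : Y, ∃ x ∈ M, dist y x < 1/(n+1) := by
    intro n
    have hpos : (0:ℝ) < 1/(n+1) := by positivity
    have hzorn : ∀ ch ⊆ {A : Set Y | A.Pairwise fun a b => (1:ℝ)/(n+1) ≤ dist a b},
        IsChain (· ⊆ ·) ch → ∃ ub ∈ {A : Set Y | A.Pairwise fun a b => (1:ℝ)/(n+1) ≤ dist a b},
          ∀ s ∈ ch, s ⊆ ub := by
      intro ch hch hchain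
      refine ⟨⋃₀ ch, ?_, fun s hs => Set.subset_sUnion_of_mem hs⟩
      intro a ha b hb hab
      obtain ⟨A, hA, haA⟩ := ha
      obtain ⟨B, hB, hbB⟩ := hb
      rcases hchain.total hA hB with hAB | hBA
      · exact hch hB (hAB haA) hbB hab
      · exact hch hA haA (hBA hbB) hab
    obtain ⟨M, hM⟩ := zorn_subset {A : Set Y | A.Pairwise fun a b => (1:ℝ)/(n+1) ≤ dist a b} hzorn
    refine ⟨M, hM.prop, fun y => ?_⟩
    by_contra hy2
    push_neg at hy2
    have hy : ∀ x ∈ M, (1:ℝ)/(n+1) ≤ dist y x := hy2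
    have hyM : y ∉ M := fun hyM => by
      have := hy y hyM; rw [dist_self] at this; linarith
    have hsym : Symmetric fun a b : Y => (1:ℝ)/(n+1) ≤ dist a b := by
      intro a b hab; rw [dist_comm]; exact hab
    have hins : insert y M ∈ {A : Set Y | A.Pairwise fun a b => (1:ℝ)/(n+1) ≤ dist a b} :=
      Set.pairwise_insert.mpr ⟨hM.prop, fun b hb _ => ⟨hy b hb, by rw [dist_comm]; exact hy b hb⟩⟩
    have heq := hM.eq_of_subset hins (Set.subset_insert y M)
    exact hyM (by rw [heq]; exact Set.mem_insert y M)
  choose M hMsep hMnet using key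
  have hdense : Dense (⋃ n, M n) := by
    rw [Metric.dense_iff]
    intro y r hr
    obtain ⟨n, hn⟩ := exists_nat_one_div_lt hr
    obtain ⟨x, hx, hxy⟩ := hMnet n y
    exact ⟨x, Metric.mem_ball.mpr (by rw [dist_comm] at hxy; exact hxy.trans hn),
      Set.mem_iUnion.mpr ⟨n, hx⟩⟩
  have hle : #(⋃ n, M n : Set Y) ≤ c := by
    have heq : (⋃ n, M n) = ⋃ m : ULift.{u} ℕ, M m.down := by
      ext y; simp only [Set.mem_iUnion]
      exact ⟨fun ⟨n, hn⟩ => ⟨ULift.up n, hn⟩, fun ⟨m, hm⟩ => ⟨m.down, hm⟩⟩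
    rw [heq]
    refine (Cardinal.mk_iUnion_le _).trans ?_
    have h1 : #(ULift.{u} ℕ) ≤ c := le_trans Cardinal.mk_le_aleph0 hc
    have h2 : ⨆ m : ULift.{u} ℕ, #(M m.down) ≤ c :=
      ciSup_le' fun m => le_of_not_gt fun hlt =>
        hcon (1/(m.down+1)) (by positivity) _ hlt (hMsep m.down)
    calc #(ULift.{u} ℕ) * ⨆ m : ULift.{u} ℕ, #(M m.down) ≤ c * c := mul_le_mul' h1 h2
      _ = c := Cardinal.mul_eq_self hc
  exact absurd (h _ hdense) (not_lt.mpr hle)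

theorem stmt11 (c : Cardinal.{u}) (hc : Cardinal.aleph0 ≤ c)
    (n : ℕ) (hn : 0 < n) (S : Fin n → Type u) (X : ∀ i, S i → Type u)
    [∀ i s, TopologicalSpace (X i s)]
    [∀ i s, TopologicalSpace.MetrizableSpace (X i s)]
    [∀ i s, Nontrivial (X i s)]
    (hS : c < #(S ⟨0, hn⟩))
    (hdep : ∀ f : (∀ i, ∀ s, X i s) → ℝ,
      (∀ (i : Fin n) (x : ∀ j, ∀ s, X j s),
        Continuous fun xi : ∀ s, X i s => f (Function.update x i xi)) →
      ∃ T : Set (S ⟨0, hn⟩), #T ≤ c ∧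
        ∀ (x : ∀ i, ∀ s, X i s) (u : ∀ s, X ⟨0, hn⟩ s),
          (∀ s ∈ T, u s = x ⟨0, hn⟩ s) →
          f (Function.update x ⟨0, hn⟩ u) = f x) :
    ∀ i s, ∃ D : Set (X i s), Dense D ∧ #D ≤ c := by
  classical
  by_contra hcon
  push_neg at hcon
  obtain ⟨i₀, s₀, hY⟩ := hcon
  letI mX : ∀ i s, MetricSpace (X i s) := fun i s =>
    TopologicalSpace.metrizableSpaceMetric (X i s)
  obtain ⟨ε, hε, A, hA, hAsep⟩ := exists_separated_of_dense_large c hc (X i₀ s₀) hY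
  -- the index type of cardinality c⁺
  let I : Type u := (Order.succ c).out
  have hImk : #I = Order.succ c := Cardinal.mk_out _
  have hIc : c < #I := by rw [hImk]; exact Order.lt_succ c
  have h1 : #I ≤ #A := by rw [hImk]; exact Order.succ_le_of_lt hA
  have h2 : #I ≤ #(S ⟨0, hn⟩) := by rw [hImk]; exact Order.succ_le_of_lt hS
  obtain ⟨eA⟩ : Nonempty (I ↪ A) := Cardinal.le_def _ _ |>.mp h1
  obtain ⟨eS⟩ : Nonempty (I ↪ S ⟨0, hn⟩) := Cardinal.le_def _ _ |>.mp h2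
  -- separated points
  let y0 : I → X i₀ s₀ := fun α => (eA α : X i₀ s₀)
  have hy0 : ∀ {α β : I}, α ≠ β → ε ≤ dist (y0 α) (y0 β) := by
    intro α β hne
    exact hAsep (eA α).2 (eA β).2 fun h => hne (eA.injective (Subtype.ext h))
  -- two distinct points in each first-block factor
  have habs : ∀ α : I, ∃ x y : X ⟨0, hn⟩ (eS α), x ≠ y := fun α => Nontrivial.exists_pair_ne
  choose a b hab using habs
  -- bump functions
  let φ : I → X i₀ s₀ → ℝ := fun α y => max 0 (1 - (4/ε) * dist y (y0 α))
  let ψ : ∀ α : I, X ⟨0, hn⟩ (eS α) → ℝ := fun α t =>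
    max 0 (1 - dist t (a α) / dist (a α) (b α))
  have φcont : ∀ α, Continuous (φ α) := fun α =>
    continuous_const.max (continuous_const.sub (continuous_const.mul
      (continuous_id.dist continuous_const)))
  have ψcont : ∀ α, Continuous (ψ α) := fun α =>
    continuous_const.max (continuous_const.sub
      ((continuous_id.dist continuous_const).div_const _))
  have φ1 : ∀ α, φ α (y0 α) = 1 := by intro α; simp [φ]
  have φ0 : ∀ α y, ε/4 ≤ dist y (y0 α) → φ α y = 0 := by
    intro α y hd
    have h4 : (0:ℝ) < 4/ε := by positivity
    have : (1:ℝ) ≤ (4/ε) * dist y (y0 α) := by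
      rw [div_mul_eq_mul_div, le_div_iff₀ hε]
      linarith
    simp only [φ, max_eq_left_iff]
    linarith
  have ψ1 : ∀ α, ψ α (a α) = 1 := by intro α; simp [ψ]
  have ψ0 : ∀ α, ψ α (b α) = 0 := by
    intro α
    have hd : (0:ℝ) < dist (a α) (b α) := dist_pos.mpr (hab α)
    have hone : dist (b α) (a α) / dist (a α) (b α) = 1 := by
      rw [dist_comm]; exact div_self hd.ne'
    simp [ψ, hone]
  have φsupp : ∀ α y, φ α y ≠ 0 → dist y (y0 α) < ε/4 := fun α y h =>
    lt_of_not_ge fun hle => h (φ0 α y hle)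
  -- the separately continuous function
  let f : (∀ i, ∀ s, X i s) → ℝ := fun x => ∑' α : I, ψ α (x ⟨0, hn⟩ (eS α)) * φ α (x i₀ s₀)
  have hsingle : ∀ (x : ∀ i, ∀ s, X i s) (α : I), (∀ β, β ≠ α → φ β (x i₀ s₀) = 0) →
      f x = ψ α (x ⟨0, hn⟩ (eS α)) * φ α (x i₀ s₀) := fun x α h =>
    tsum_eq_single α fun β hβ => by rw [h β hβ, mul_zero]
  have hcoord : Continuous fun x' : ∀ i s, X i s => x' i₀ s₀ :=
    (continuous_apply s₀).comp (continuous_apply i₀)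
  have hfc : Continuous f := by
    rw [continuous_iff_continuousAt]
    intro x
    by_cases hx : ∃ α, dist (x i₀ s₀) (y0 α) < ε/2
    · obtain ⟨α₀, hα₀⟩ := hx
      have hW : IsOpen {x' : ∀ i s, X i s | dist (x' i₀ s₀) (y0 α₀) < ε/2} :=
        Metric.isOpen_ball.preimage hcoord
      have hev : ∀ᶠ x' in nhds x, f x' =
          ψ α₀ (x' ⟨0, hn⟩ (eS α₀)) * φ α₀ (x' i₀ s₀) := by
        filter_upwards [hW.mem_nhds hα₀] with x' hx'
        refine hsingle x' α₀ fun β hβ => φ0 β _ ?_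
        have ht := dist_triangle (y0 α₀) (x' i₀ s₀) (y0 β)
        have h1 : ε ≤ dist (y0 α₀) (y0 β) := hy0 (Ne.symm hβ)
        have h2 : dist (y0 α₀) (x' i₀ s₀) < ε/2 := by rw [dist_comm]; exact hx'
        linarith
      have hct : ContinuousAt
          (fun x' : ∀ i s, X i s => ψ α₀ (x' ⟨0, hn⟩ (eS α₀)) * φ α₀ (x' i₀ s₀)) x :=
        (((ψcont α₀).comp ((continuous_apply (eS α₀)).comp
          (continuous_apply (⟨0, hn⟩ : Fin n)))).mul ((φcont α₀).comp hcoord)).continuousAt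
      exact hct.congr (hev.mono fun _ h => h.symm)
    · push_neg at hx
      have hW : IsOpen {x' : ∀ i s, X i s | dist (x' i₀ s₀) (x i₀ s₀) < ε/8} :=
        Metric.isOpen_ball.preimage hcoord
      have hmem : x ∈ {x' : ∀ i s, X i s | dist (x' i₀ s₀) (x i₀ s₀) < ε/8} := by
        simp only [Set.mem_setOf_eq, dist_self]; positivity
      have hev : ∀ᶠ x' in nhds x, f x' = 0 := by
        filter_upwards [hW.mem_nhds hmem] with x' hx'
        have hz : ∀ β, φ β (x' i₀ s₀) = 0 := by
          intro β
          refine φ0 β _ ?_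
          have ht := dist_triangle (x i₀ s₀) (x' i₀ s₀) (y0 β)
          have h1 : ε/2 ≤ dist (x i₀ s₀) (y0 β) := hx β
          have h2 : dist (x i₀ s₀) (x' i₀ s₀) < ε/8 := by rw [dist_comm]; exact hx'
          linarith
        calc f x' = ∑' (_ : I), (0:ℝ) := tsum_congr fun β => by rw [hz β, mul_zero]
          _ = 0 := tsum_zero
      exact continuousAt_const.congr (hev.mono fun _ h => h.symm)
  have hsep : ∀ (i : Fin n) (x : ∀ j, ∀ s, X j s),
      Continuous fun xi : ∀ s, X i s => f (Function.update x i xi) := fun i x =>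
    hfc.comp (continuous_const.update i continuous_id)
  obtain ⟨T, hT, hTf⟩ := hdep f hsep
  -- choose a good index α
  let B : Set I := {α | ∃ h : i₀ = (⟨0, hn⟩ : Fin n), h ▸ s₀ = eS α}
  have hBsub : B.Subsingleton := by
    rintro α ⟨h, hα⟩ β ⟨h', hβ⟩
    exact eS.injective (hα ▸ hβ ▸ rfl)
  let U : Set I := (fun α => eS α) ⁻¹' T ∪ B
  have hU : #U ≤ c := by
    refine (Cardinal.mk_union_le _ _).trans ?_
    have hp : #((fun α => eS α) ⁻¹' T) ≤ c :=
      (Cardinal.mk_preimage_of_injective _ _ eS.injective).trans hT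
    have hb : #B ≤ 1 := Cardinal.mk_le_one_iff_set_subsingleton.mpr hBsub
    calc #((fun α => eS α) ⁻¹' T) + #B ≤ c + c :=
      add_le_add hp (hb.trans (Cardinal.one_le_aleph0.trans hc))
      _ = c := Cardinal.add_eq_self hc
  obtain ⟨α, hα⟩ : ∃ α : I, α ∉ U := by
    by_contra hall
    push_neg at hall
    have : U = Set.univ := Set.eq_univ_of_forall hall
    rw [this, Cardinal.mk_univ] at hU
    exact absurd hU (not_le.mpr hIc)
  have hαT : eS α ∉ T := fun h => hα (Set.mem_union_left _ h)
  have hαB : ∀ h : i₀ = (⟨0, hn⟩ : Fin n), h ▸ s₀ ≠ eS α := fun h he =>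
    hα (Set.mem_union_right _ ⟨h, he⟩)
  -- construct the witness points
  let base : ∀ i, ∀ s, X i s := fun i s => Classical.arbitrary _
  let x1 : ∀ i, ∀ s, X i s :=
    Function.update base i₀ (Function.update (base i₀) s₀ (y0 α))
  let x2 : ∀ i, ∀ s, X i s :=
    Function.update x1 ⟨0, hn⟩ (Function.update (x1 ⟨0, hn⟩) (eS α) (b α))
  let uu : ∀ s, X ⟨0, hn⟩ s := Function.update (x2 ⟨0, hn⟩) (eS α) (a α)
  have hx2first : x2 ⟨0, hn⟩ = Function.update (x1 ⟨0, hn⟩) (eS α) (b α) :=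
    Function.update_self _ _ _
  have hx2b : x2 ⟨0, hn⟩ (eS α) = b α := by rw [hx2first]; exact Function.update_self _ _ _
  have hx1y : x1 i₀ s₀ = y0 α := by
    show Function.update base i₀ (Function.update (base i₀) s₀ (y0 α)) i₀ s₀ = y0 α
    rw [Function.update_self]
    exact Function.update_self _ _ _
  have hx2y : x2 i₀ s₀ = y0 α := by
    by_cases h0 : i₀ = (⟨0, hn⟩ : Fin n)
    · subst h0
      have hne : s₀ ≠ eS α := hαB rfl
      rw [hx2first, Function.update_of_ne hne, hx1y]
    · show Function.update x1 ⟨0, hn⟩ _ i₀ s₀ = y0 α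
      rw [Function.update_of_ne h0, hx1y]
  have hx'y : Function.update x2 ⟨0, hn⟩ uu i₀ s₀ = y0 α := by
    by_cases h0 : i₀ = (⟨0, hn⟩ : Fin n)
    · subst h0
      have hne : s₀ ≠ eS α := hαB rfl
      rw [Function.update_self]
      show Function.update (x2 ⟨0, hn⟩) (eS α) (a α) s₀ = y0 α
      rw [Function.update_of_ne hne]
      exact hx2y
    · rw [Function.update_of_ne h0]
      exact hx2y
  have hx'a : Function.update x2 ⟨0, hn⟩ uu ⟨0, hn⟩ (eS α) = a α := by
    rw [Function.update_self]
    exact Function.update_self _ _ _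
  have hzero : ∀ β, β ≠ α → φ β (y0 α) = 0 := by
    intro β hβ
    refine φ0 β _ ?_
    have := hy0 (Ne.symm hβ)
    linarith
  have hfx2 : f x2 = 0 := by
    rw [hsingle x2 α (fun β hβ => by rw [hx2y]; exact hzero β hβ), hx2b, ψ0, zero_mul]
  have hfx' : f (Function.update x2 ⟨0, hn⟩ uu) = 1 := by
    rw [hsingle _ α (fun β hβ => by rw [hx'y]; exact hzero β hβ), hx'a, hx'y, ψ1, φ1,
      one_mul]
  have hagree : ∀ s ∈ T, uu s = x2 ⟨0, hn⟩ s := by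
    intro s hs
    have : s ≠ eS α := fun h => hαT (h ▸ hs)
    exact Function.update_of_ne this _ _
  have := hTf x2 uu hagree
  rw [hfx', hfx2] at this
  norm_num at this
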